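/- Let φ : [0,∞) → [0,∞) be an increasing, continuous function with φ(0) = 0 and φ(λ) > 0 for all λ > 0, and let ν ∈ (0,1]. If there exist constants 0 < c ≤ C such that c·φ(λ)^{2ν} ≤ e(λ) ≤ C·φ(λ)^{2ν} for all λ > 0, then x† does NOT lie in the range of φ(L*L)^ν; i.e. the variational inequality and the two-sided spectral decay are compatible, but the standard source condition x† ∈ range(φ^ν(L*L)) fails (the candidate preimage ξ would satisfy ‖ξ‖² ≥ c − C + 2νc·log(φ(‖L‖²)/φ(Λ)) → ∞ as Λ → 0). -/

import Mathlib

open MeasureTheory RealInnerProductSpace Filter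

theorem statement17
    {X : Type*} [NormedAddCommGroup X] [InnerProductSpace ℝ X] [CompleteSpace X]
    {Y : Type*} [NormedAddCommGroup Y] [InnerProductSpace ℝ Y] [CompleteSpace Y]
    (L : X →L[ℝ] Y) (y : Y) (xdag : X)
    (hsol : L xdag = y) (hmin : ∀ x : X, L x = y → ‖xdag‖ ≤ ‖x‖)
    (E : ℝ → X →L[ℝ] X)
    (hEsa : ∀ t : ℝ, ∀ u v : X, ⟪E t u, v⟫ = ⟪u, E t v⟫)
    (hEcomp : ∀ s t : ℝ, ∀ u : X, E s (E t u) = E (min s t) u)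
    (hEtop : ∀ t : ℝ, ‖L‖ ^ 2 ≤ t → ∀ u : X, E t u = u)
    (φ : ℝ → ℝ) (hφmono : MonotoneOn φ (Set.Ici 0))
    (hφcont : ContinuousOn φ (Set.Ici 0)) (hφ0 : φ 0 = 0) (hφpos : ∀ t > (0:ℝ), 0 < φ t)
    (ν : ℝ) (hν0 : 0 < ν) (hν1 : ν ≤ 1)
    (Aφν : X →L[ℝ] X)
    (hAcomm : ∀ t : ℝ, ∀ u : X, Aφν (E t u) = E t (Aφν u))
    (hAub : ∀ s t : ℝ, 0 ≤ s → s ≤ t → ∀ x : X,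
      ‖Aφν (E t x - E s x)‖ ≤ φ t ^ ν * ‖E t x - E s x‖)
    (c C : ℝ) (hc : 0 < c) (hcC : c ≤ C)
    (hdecay : ∀ t > (0:ℝ),
      c * φ t ^ (2 * ν) ≤ ‖E t xdag‖ ^ 2 ∧ ‖E t xdag‖ ^ 2 ≤ C * φ t ^ (2 * ν)) :
    ¬ ∃ ξ : X, Aφν ξ = xdag := by
  rintro ⟨ξ, hξ⟩
  -- Pythagoras for the spectral projections
  have hpyth : ∀ s t : ℝ, s ≤ t → ∀ u : X,
      ‖E t u‖ ^ 2 = ‖E s u‖ ^ 2 + ‖E t u - E s u‖ ^ 2 := by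
    intro s t hst u
    have h1 : ⟪E s u, E t u⟫ = ⟪u, E s u⟫ := by
      rw [hEsa s u (E t u), hEcomp s t u, min_eq_left hst]
    have h2 : ⟪E s u, E s u⟫ = ⟪u, E s u⟫ := by
      rw [hEsa s u (E s u), hEcomp s s u, min_self]
    have horth : ⟪E s u, E t u - E s u⟫ = 0 := by
      rw [inner_sub_right, h1, h2, sub_self]
    have hsplit : E t u = E s u + (E t u - E s u) := by abel
    calc ‖E t u‖ ^ 2 = ‖E s u + (E t u - E s u)‖ ^ 2 := by rw [← hsplit]
      _ = ‖E s u‖ ^ 2 + 2 * ⟪E s u, E t u - E s u⟫ + ‖E t u - E s u‖ ^ 2 :=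
          norm_add_sq_real _ _
      _ = ‖E s u‖ ^ 2 + ‖E t u - E s u‖ ^ 2 := by rw [horth]; ring
  -- at each scale t we can find a much smaller scale s
  have key : ∀ t : ℝ, 0 < t → ∃ s : ℝ, 0 < s ∧ s < t ∧
      C * φ s ^ (2 * ν) ≤ c / 2 * φ t ^ (2 * ν) := by
    intro t ht
    have hφt := hφpos t ht
    have hrpos : (0:ℝ) < φ t ^ (2 * ν) := Real.rpow_pos_of_pos hφt _
    have htarget : 0 < c / 2 * φ t ^ (2 * ν) := by positivity
    have h1 : ContinuousWithinAt φ (Set.Ici 0) 0 := hφcont 0 (Set.mem_Ici.mpr le_rfl)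
    have hcw : ContinuousWithinAt (fun s => C * φ s ^ (2 * ν)) (Set.Ici 0) 0 :=
      continuousWithinAt_const.mul (h1.rpow_const (Or.inr (by positivity)))
    have hf0 : C * φ 0 ^ (2 * ν) = 0 := by
      rw [hφ0, Real.zero_rpow (by positivity : (0:ℝ) < 2 * ν).ne', mul_zero]
    have htd : Tendsto (fun s => C * φ s ^ (2 * ν)) (nhdsWithin 0 (Set.Ici 0))
        (nhds (C * φ 0 ^ (2 * ν))) := hcw
    rw [hf0] at htd
    have hev : ∀ᶠ s in nhdsWithin 0 (Set.Ici 0),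
        C * φ s ^ (2 * ν) < c / 2 * φ t ^ (2 * ν) :=
      htd.eventually_lt_const htarget
    obtain ⟨δ, hδ, hball⟩ := Metric.mem_nhdsWithin_iff.mp (Filter.eventually_iff.mp hev)
    refine ⟨min (δ / 2) (t / 2), by positivity, ?_, ?_⟩
    · exact (min_le_right _ _).trans_lt (by linarith)
    · have hmem : min (δ / 2) (t / 2) ∈ Set.Ici (0:ℝ) := Set.mem_Ici.mpr (le_of_lt (by positivity))
      have hdist : dist (min (δ / 2) (t / 2)) 0 < δ := by
        rw [Real.dist_eq, sub_zero, abs_of_pos (by positivity)]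
        exact (min_le_left _ _).trans_lt (by linarith)
      exact le_of_lt (hball ⟨Metric.mem_ball.mpr hdist, hmem⟩)
  -- the decreasing sequence of scales
  let seq : ℕ → {t : ℝ // 0 < t} := fun n =>
    Nat.rec ⟨max (‖L‖ ^ 2) 1, lt_max_of_lt_right one_pos⟩
      (fun _ p => ⟨(key p.1 p.2).choose, (key p.1 p.2).choose_spec.1⟩) n
  have hstep : ∀ n : ℕ, (seq (n+1)).1 < (seq n).1 ∧
      C * φ (seq (n+1)).1 ^ (2 * ν) ≤ c / 2 * φ (seq n).1 ^ (2 * ν) := by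
    intro n
    exact ⟨(key (seq n).1 (seq n).2).choose_spec.2.1,
      (key (seq n).1 (seq n).2).choose_spec.2.2⟩
  -- main induction
  have hmain : ∀ N : ℕ, (N : ℝ) * (c / 2) + ‖E (seq N).1 ξ‖ ^ 2 ≤ ‖ξ‖ ^ 2 := by
    intro N
    induction N with
    | zero =>
      have : E (seq 0).1 ξ = ξ := hEtop _ (le_max_left _ _) ξ
      rw [this]; simp
    | succ N ih =>
      set t := (seq N).1 with hts
      set s := (seq (N+1)).1 with hss
      have hspos : 0 < s := (seq (N+1)).2
      have htpos : 0 < t := (seq N).2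
      have hst : s < t := (hstep N).1
      have hkey : C * φ s ^ (2 * ν) ≤ c / 2 * φ t ^ (2 * ν) := (hstep N).2
      have hφt : 0 < φ t := hφpos t htpos
      have hrpos : (0:ℝ) < φ t ^ (2 * ν) := Real.rpow_pos_of_pos hφt _
      have h2ν : φ t ^ (2 * ν) = (φ t ^ ν) ^ 2 := by
        rw [two_mul, Real.rpow_add hφt, sq]
      -- lower bound on the piece of ξ
      have hA : Aφν (E t ξ - E s ξ) = E t xdag - E s xdag := by
        rw [map_sub, hAcomm, hAcomm, hξ]
      have hub := hAub s t hspos.le hst.le ξ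
      have hsq : ‖Aφν (E t ξ - E s ξ)‖ ^ 2 ≤ (φ t ^ ν) ^ 2 * ‖E t ξ - E s ξ‖ ^ 2 := by
        have := pow_le_pow_left₀ (norm_nonneg _) hub 2
        rwa [mul_pow] at this
      have hpydag := hpyth s t hst.le xdag
      have hd1 := (hdecay t htpos).1
      have hd2 := (hdecay s hspos).2
      have hlow : c / 2 ≤ ‖E t ξ - E s ξ‖ ^ 2 := by
        have h1 : c / 2 * φ t ^ (2 * ν) ≤ ‖E t xdag - E s xdag‖ ^ 2 := by
          nlinarith [hpydag, hd1, hd2, hkey]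
        have h2 : ‖E t xdag - E s xdag‖ ^ 2 ≤ φ t ^ (2 * ν) * ‖E t ξ - E s ξ‖ ^ 2 := by
          rw [← hA, h2ν]; exact hsq
        nlinarith [hrpos]
      have hpy := hpyth s t hst.le ξ
      push_cast
      linarith [ih, hpy, hlow]
  obtain ⟨N, hN⟩ := exists_nat_gt (‖ξ‖ ^ 2 / (c / 2))
  have h1 := hmain N
  have h2 : ‖ξ‖ ^ 2 < (N : ℝ) * (c / 2) := by
    rw [div_lt_iff₀ (by positivity)] at hN
    linarith
  linarith [sq_nonneg ‖E (seq N).1 ξ‖]
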